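/- Let k ∈ ℕ, b > 0, and t ≥ 0. Then Σ_{n = ⌊t⌋+1}^{∞} n^k · exp(−b·√n) ≤ b^{−(2k+2)} · (2k+3)! · max{1, b²·t}^{k+1} · exp(−b·√t). -/

import Mathlib

open Real

/-- Auxiliary function: `exp(-bx) · Σ_{j≤m} (m!/j!) (bx)^j`, essentially `b^{m+1}` times the
incomplete Gamma integral `∫_x^∞ s^m e^{-bs} ds`. -/
noncomputable def Qaux (b : ℝ) (m : ℕ) (x : ℝ) : ℝ :=
  Real.exp (-b * x) * ∑ j ∈ Finset.range (m + 1),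
    ((m.factorial : ℝ) / (j.factorial : ℝ)) * (b * x) ^ j

lemma exp_neg_hasDerivAt (b x : ℝ) :
    HasDerivAt (fun z : ℝ => Real.exp (-b * z)) (-b * Real.exp (-b * x)) x := by
  have h1 : HasDerivAt (fun z : ℝ => -b * z) (-b) x := by
    simpa using (hasDerivAt_id x).const_mul (-b)
  simpa [mul_comm] using h1.exp

lemma Qaux_hasDerivAt (b : ℝ) (m : ℕ) (x : ℝ) :
    HasDerivAt (Qaux b m) (-(b * (b * x) ^ m * Real.exp (-b * x))) x := by
  have hexp := exp_neg_hasDerivAt b x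
  have hsum : HasDerivAt
      (fun x : ℝ => ∑ j ∈ Finset.range (m + 1),
        ((m.factorial : ℝ) / (j.factorial : ℝ)) * (b * x) ^ j)
      (b * ∑ j ∈ Finset.range m, ((m.factorial : ℝ) / (j.factorial : ℝ)) * (b * x) ^ j) x := by
    have hterm : ∀ j ∈ Finset.range (m + 1), HasDerivAt
        (fun x : ℝ => ((m.factorial : ℝ) / (j.factorial : ℝ)) * (b * x) ^ j)
        (((m.factorial : ℝ) / (j.factorial : ℝ)) * ((j : ℝ) * (b * x) ^ (j - 1) * b)) x := by
      intro j _
      have hbx : HasDerivAt (fun x : ℝ => b * x) b x := by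
        simpa using (hasDerivAt_id x).const_mul b
      exact (hbx.pow j).const_mul _
    have H := HasDerivAt.fun_sum hterm
    refine H.congr_deriv (Eq.symm ?_)
    rw [Finset.sum_range_succ']
    have h0 : ((m.factorial : ℝ) / ((0:ℕ).factorial : ℝ)) * (((0:ℕ) : ℝ) * (b * x) ^ (0 - 1) * b)
        = 0 := by simp
    rw [h0, add_zero, Finset.mul_sum]
    refine Finset.sum_congr rfl fun j _ => ?_
    have hfac : ((m.factorial : ℝ) / ((j + 1).factorial : ℝ)) * ((j : ℝ) + 1)
        = (m.factorial : ℝ) / (j.factorial : ℝ) := by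
      rw [Nat.factorial_succ]
      have hj : (j.factorial : ℝ) ≠ 0 := Nat.cast_ne_zero.2 j.factorial_ne_zero
      have hj1 : ((j : ℝ) + 1) ≠ 0 := by positivity
      push_cast
      field_simp
    calc b * (((m.factorial : ℝ) / (j.factorial : ℝ)) * (b * x) ^ j)
        = ((m.factorial : ℝ) / ((j + 1).factorial : ℝ)) * ((j : ℝ) + 1) * (b * x) ^ j * b := by
          rw [hfac]; ring
      _ = (m.factorial : ℝ) / ((j + 1).factorial : ℝ)
            * (((j + 1 : ℕ) : ℝ) * (b * x) ^ (j + 1 - 1) * b) := by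
          push_cast
          ring
  have H := hexp.fun_mul hsum
  refine H.congr_deriv (Eq.symm ?_)
  rw [Finset.sum_range_succ]
  have hmm : ((m.factorial : ℝ) / (m.factorial : ℝ)) = 1 := by
    have : (m.factorial : ℝ) ≠ 0 := Nat.cast_ne_zero.2 m.factorial_ne_zero
    field_simp
  rw [hmm]
  ring

/-- Key monotonicity: `z ↦ Qaux b m z - C · exp (-b z)` is antitone to the right of any
point `x ≥ 0` with `C ≤ (b x)^m`. -/
lemma Qaux_sub_le (b : ℝ) (hb : 0 < b) (m : ℕ) (C x y : ℝ) (hx : 0 ≤ x) (hxy : x ≤ y)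
    (hC : C ≤ (b * x) ^ m) :
    Qaux b m y - C * Real.exp (-b * y) ≤ Qaux b m x - C * Real.exp (-b * x) := by
  set g : ℝ → ℝ := fun z => Qaux b m z - C * Real.exp (-b * z) with hg
  have hderiv : ∀ z : ℝ, HasDerivAt g
      (-(b * (b * z) ^ m * Real.exp (-b * z)) - C * (-b * Real.exp (-b * z))) z := by
    intro z
    have hexp := exp_neg_hasDerivAt b z
    exact (Qaux_hasDerivAt b m z).sub (hexp.const_mul C)
  have hanti : AntitoneOn g (Set.Icc x y) := by
    apply antitoneOn_of_deriv_nonpos (convex_Icc x y)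
    · exact fun z _ => ((hderiv z).continuousAt).continuousWithinAt
    · exact fun z hz => ((hderiv z).differentiableAt).differentiableWithinAt
    · intro z hz
      rw [interior_Icc] at hz
      rw [(hderiv z).deriv]
      have hbz : 0 ≤ b * x := by positivity
      have hle : (b * x) ^ m ≤ (b * z) ^ m := by
        apply pow_le_pow_left₀ hbz
        nlinarith [hz.1.le]
      have hexppos : 0 < Real.exp (-b * z) := Real.exp_pos _
      nlinarith [mul_nonneg (mul_nonneg hb.le hexppos.le) (sub_nonneg.2 (hC.trans hle))]
  exact hanti (Set.left_mem_Icc.2 hxy) (Set.right_mem_Icc.2 hxy) hxy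

lemma Qaux_lower (b : ℝ) (m : ℕ) (x : ℝ) (hbx : 0 ≤ b * x) :
    (b * x) ^ m * Real.exp (-b * x) ≤ Qaux b m x := by
  unfold Qaux
  rw [Finset.sum_range_succ]
  have hmm : ((m.factorial : ℝ) / (m.factorial : ℝ)) = 1 := by
    have : (m.factorial : ℝ) ≠ 0 := Nat.cast_ne_zero.2 m.factorial_ne_zero
    field_simp
  rw [hmm, one_mul, mul_add, mul_comm (Real.exp (-b * x)) ((b * x) ^ m)]
  have hrest : 0 ≤ Real.exp (-b * x) * ∑ j ∈ Finset.range m,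
      ((m.factorial : ℝ) / (j.factorial : ℝ)) * (b * x) ^ j := by
    apply mul_nonneg (Real.exp_pos _).le
    apply Finset.sum_nonneg
    intro j _
    positivity
  linarith

lemma Qaux_upper (b : ℝ) (m : ℕ) (x : ℝ) (hbx : 0 ≤ b * x) :
    Qaux b m x ≤ ((m + 1).factorial : ℝ) * max 1 (b * x) ^ m * Real.exp (-b * x) := by
  unfold Qaux
  rw [mul_comm (Real.exp (-b * x)) _]
  apply mul_le_mul_of_nonneg_right _ (Real.exp_pos _).le
  have hterm : ∀ j ∈ Finset.range (m + 1),
      ((m.factorial : ℝ) / (j.factorial : ℝ)) * (b * x) ^ j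
        ≤ (m.factorial : ℝ) * max 1 (b * x) ^ m := by
    intro j hj
    have hjm : j ≤ m := Nat.lt_succ_iff.mp (Finset.mem_range.mp hj)
    have h1 : ((m.factorial : ℝ) / (j.factorial : ℝ)) ≤ (m.factorial : ℝ) := by
      apply div_le_self (by positivity)
      exact_mod_cast j.factorial_pos
    have h2 : (b * x) ^ j ≤ max 1 (b * x) ^ m := by
      calc (b * x) ^ j ≤ max 1 (b * x) ^ j :=
            pow_le_pow_left₀ hbx (le_max_right _ _) j
        _ ≤ max 1 (b * x) ^ m := pow_le_pow_right₀ (le_max_left _ _) hjm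
    have hnn : 0 ≤ (b * x) ^ j := pow_nonneg hbx j
    calc ((m.factorial : ℝ) / (j.factorial : ℝ)) * (b * x) ^ j
        ≤ (m.factorial : ℝ) * (b * x) ^ j := mul_le_mul_of_nonneg_right h1 hnn
      _ ≤ (m.factorial : ℝ) * max 1 (b * x) ^ m :=
          mul_le_mul_of_nonneg_left h2 (by positivity)
  calc ∑ j ∈ Finset.range (m + 1), ((m.factorial : ℝ) / (j.factorial : ℝ)) * (b * x) ^ j
      ≤ ∑ _j ∈ Finset.range (m + 1), (m.factorial : ℝ) * max 1 (b * x) ^ m :=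
        Finset.sum_le_sum hterm
    _ = ((m : ℝ) + 1) * ((m.factorial : ℝ) * max 1 (b * x) ^ m) := by
        rw [Finset.sum_const, Finset.card_range]; ring
    _ = ((m + 1).factorial : ℝ) * max 1 (b * x) ^ m := by
        rw [Nat.factorial_succ]; push_cast; ring

lemma A_le (k M : ℕ) : (∑ i ∈ Finset.range M, ((i + 1 : ℕ) : ℝ) ^ k) ≤ (M : ℝ) ^ (k + 1) := by
  calc (∑ i ∈ Finset.range M, ((i + 1 : ℕ) : ℝ) ^ k)
      ≤ ∑ _i ∈ Finset.range M, (M : ℝ) ^ k := by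
        apply Finset.sum_le_sum
        intro i hi
        apply pow_le_pow_left₀ (by positivity)
        exact_mod_cast Finset.mem_range.mp hi
    _ = (M : ℝ) * (M : ℝ) ^ k := by rw [Finset.sum_const, Finset.card_range]; ring
    _ = (M : ℝ) ^ (k + 1) := by ring

lemma sqrt_pow_eq (b : ℝ) (k : ℕ) (u : ℝ) (hu : 0 ≤ u) :
    (b * Real.sqrt u) ^ (2 * k + 2) = b ^ (2 * k + 2) * u ^ (k + 1) := by
  rw [mul_pow]
  congr 1
  have h2 : Real.sqrt u ^ (2 * k + 2) = (Real.sqrt u ^ 2) ^ (k + 1) := by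
    rw [← pow_mul]; ring_nf
  rw [h2, Real.sq_sqrt hu]

/-- The partial-sum bound, by induction (Abel summation in disguise). -/
lemma main_ind (k : ℕ) (b : ℝ) (hb : 0 < b) (N : ℕ) :
    ∀ M, N + 1 ≤ M →
    b ^ (2 * k + 2) * (∑ n ∈ Finset.Ioc N M, (n : ℝ) ^ k * Real.exp (-b * Real.sqrt n))
      ≤ Qaux b (2 * k + 2) (Real.sqrt ((N : ℝ) + 1)) - Qaux b (2 * k + 2) (Real.sqrt M)
        + b ^ (2 * k + 2) * (∑ i ∈ Finset.range M, ((i + 1 : ℕ) : ℝ) ^ k)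
          * Real.exp (-b * Real.sqrt M) := by
  intro M hM
  induction M, hM using Nat.le_induction with
  | base =>
      have hIoc : Finset.Ioc N (N + 1) = {N + 1} := by
        ext x; simp only [Finset.mem_Ioc, Finset.mem_singleton]; omega
      rw [hIoc, Finset.sum_singleton, Finset.sum_range_succ]
      push_cast
      have hS : 0 ≤ ∑ i ∈ Finset.range N, ((i : ℝ) + 1) ^ k := by
        apply Finset.sum_nonneg; intro i _; positivity
      rw [sub_self, zero_add]
      have hexp : 0 < Real.exp (-b * Real.sqrt ((N : ℝ) + 1)) := Real.exp_pos _
      have hbp : 0 < b ^ (2 * k + 2) := pow_pos hb _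
      nlinarith [mul_nonneg (mul_nonneg hbp.le hS) hexp.le]
  | succ M hM ih =>
      have hNM : N ≤ M := Nat.le_of_succ_le hM
      rw [Finset.sum_Ioc_succ_top hNM, Finset.sum_range_succ]
      have hkey : Qaux b (2 * k + 2) (Real.sqrt ((M : ℝ) + 1))
            - (b ^ (2 * k + 2) * ∑ i ∈ Finset.range M, ((i + 1 : ℕ) : ℝ) ^ k)
              * Real.exp (-b * Real.sqrt ((M : ℝ) + 1))
          ≤ Qaux b (2 * k + 2) (Real.sqrt (M : ℝ))
            - (b ^ (2 * k + 2) * ∑ i ∈ Finset.range M, ((i + 1 : ℕ) : ℝ) ^ k)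
              * Real.exp (-b * Real.sqrt (M : ℝ)) := by
        apply Qaux_sub_le b hb (2 * k + 2) _ _ _ (Real.sqrt_nonneg _)
        · exact Real.sqrt_le_sqrt (by linarith)
        · rw [sqrt_pow_eq b k (M : ℝ) (by positivity)]
          exact mul_le_mul_of_nonneg_left (A_le k M) (by positivity)
      have hbp : 0 < b ^ (2 * k + 2) := pow_pos hb _
      push_cast at hkey ih ⊢
      nlinarith [hkey, ih]

theorem sum_pow_exp_sqrt_tail (k : ℕ) (b t : ℝ) (hb : 0 < b) (ht : 0 ≤ t) :
    (∑' n : ℕ, if Nat.floor t < n then (n : ℝ) ^ k * Real.exp (-b * Real.sqrt n) else 0) ≤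
      ((2 * k + 3).factorial : ℝ) * max 1 (b ^ 2 * t) ^ (k + 1) *
        Real.exp (-b * Real.sqrt t) / b ^ (2 * k + 2) := by
  set N := Nat.floor t with hN
  set m := 2 * k + 2 with hm
  have hbp : 0 < b ^ m := pow_pos hb _
  have hsqt : 0 ≤ b * Real.sqrt t := by positivity
  -- upper bound for `Qaux` at `√t`
  have hmax : max 1 (b * Real.sqrt t) ^ m = max 1 (b ^ 2 * t) ^ (k + 1) := by
    have hsq := Real.sq_sqrt ht
    rcases le_total (b * Real.sqrt t) 1 with h | h
    · have h2 : b ^ 2 * t ≤ 1 := by nlinarith [Real.sqrt_nonneg t]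
      rw [max_eq_left h, max_eq_left h2, one_pow, one_pow]
    · have h2 : 1 ≤ b ^ 2 * t := by nlinarith [Real.sqrt_nonneg t]
      rw [max_eq_right h, max_eq_right h2, hm]
      have h3 : (b * Real.sqrt t) ^ (2 * k + 2) = ((b * Real.sqrt t) ^ 2) ^ (k + 1) := by
        rw [← pow_mul]; ring_nf
      rw [h3, mul_pow, Real.sq_sqrt ht]
  have hQt : Qaux b m (Real.sqrt t)
      ≤ ((2 * k + 3).factorial : ℝ) * max 1 (b ^ 2 * t) ^ (k + 1)
          * Real.exp (-b * Real.sqrt t) := by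
    have h := Qaux_upper b m (Real.sqrt t) hsqt
    rw [hmax] at h
    have hmf : (m + 1) = 2 * k + 3 := by rw [hm]
    rw [hmf] at h
    exact h
  -- nonnegativity of the summand
  have hnonneg : ∀ n : ℕ,
      0 ≤ (if N < n then (n : ℝ) ^ k * Real.exp (-b * Real.sqrt n) else 0) := by
    intro n
    split
    · positivity
    · exact le_rfl
  have hmain : (∑' n : ℕ, if N < n then (n : ℝ) ^ k * Real.exp (-b * Real.sqrt n) else 0)
      ≤ Qaux b m (Real.sqrt t) / b ^ m := by
    apply Real.tsum_le_of_sum_range_le hnonneg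
    intro M'
    rw [le_div_iff₀ hbp]
    set MM := N + M' + 1 with hMM
    have h1 : (∑ i ∈ Finset.range M', if N < i then (i : ℝ) ^ k * Real.exp (-b * Real.sqrt i) else 0)
        ≤ ∑ n ∈ Finset.Ioc N MM, (n : ℝ) ^ k * Real.exp (-b * Real.sqrt n) := by
      rw [← Finset.sum_filter]
      apply Finset.sum_le_sum_of_subset_of_nonneg
      · intro i hi
        simp only [Finset.mem_filter, Finset.mem_range, Finset.mem_Ioc] at hi ⊢
        omega
      · intro i _ _
        positivity
    have h2 := main_ind k b hb N MM (by omega)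
    have h3 : b ^ m * (∑ i ∈ Finset.range MM, ((i + 1 : ℕ) : ℝ) ^ k)
          * Real.exp (-b * Real.sqrt MM) ≤ Qaux b m (Real.sqrt MM) := by
      have hlow := Qaux_lower b m (Real.sqrt MM) (by positivity)
      have h4 : b ^ m * (∑ i ∈ Finset.range MM, ((i + 1 : ℕ) : ℝ) ^ k)
          ≤ (b * Real.sqrt MM) ^ m := by
        rw [hm, sqrt_pow_eq b k (MM : ℝ) (by positivity)]
        exact mul_le_mul_of_nonneg_left (A_le k MM) (by positivity)
      calc b ^ m * (∑ i ∈ Finset.range MM, ((i + 1 : ℕ) : ℝ) ^ k) * Real.exp (-b * Real.sqrt MM)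
          ≤ (b * Real.sqrt MM) ^ m * Real.exp (-b * Real.sqrt MM) :=
            mul_le_mul_of_nonneg_right h4 (Real.exp_pos _).le
        _ ≤ Qaux b m (Real.sqrt MM) := hlow
    have h5 : Qaux b m (Real.sqrt ((N : ℝ) + 1)) ≤ Qaux b m (Real.sqrt t) := by
      have hfl : t ≤ (N : ℝ) + 1 := (Nat.lt_floor_add_one t).le
      have h6 := Qaux_sub_le b hb m 0 (Real.sqrt t) (Real.sqrt ((N : ℝ) + 1))
        (Real.sqrt_nonneg t) (Real.sqrt_le_sqrt hfl) (by positivity)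
      simpa using h6
    have hmul : (∑ i ∈ Finset.range M', if N < i then (i : ℝ) ^ k
          * Real.exp (-b * Real.sqrt i) else 0) * b ^ m
        ≤ b ^ m * (∑ n ∈ Finset.Ioc N MM, (n : ℝ) ^ k * Real.exp (-b * Real.sqrt n)) := by
      rw [mul_comm]
      exact mul_le_mul_of_nonneg_left h1 hbp.le
    rw [← hm] at h2
    linarith
  refine hmain.trans ?_
  exact div_le_div_of_nonneg_right hQt hbp.le
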